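/- Let k > 0 and let λ1, λ2 be reals with 0 < λ1 < 1/√2 and λ2 > 1 (and λ1 ≤ λ2). Define M(x) = √((2k + (λ2−λ1)x²)/(2λ2)) + √(2kλ2 − λ1(λ2−λ1)x²) for x ∈ [−√(2k/λ1), √(2k/λ1)]. Then for every x in this interval, M(x) ≤ √(k(λ1+λ2)/(λ1λ2(1+2λ1λ2))) + 2√(kλ1λ2(λ1+λ2)/(1+2λ1λ2)), with equality at the points x = ±√(2kλ2)·√(1−2λ1²)/√(−λ1² + λ1λ2 − 2λ1³λ2 + 2λ1²λ2²). -/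

import Mathlib

/-!
STATEMENT 15: Let `k > 0` and `0 < λ1 < 1/√2`, `λ2 > 1`, `λ1 ≤ λ2`.  Define
`M(x) = √((2k + (λ2−λ1)x²)/(2λ2)) + √(2kλ2 − λ1(λ2−λ1)x²)` for
`x ∈ [−√(2k/λ1), √(2k/λ1)]`.  Then for every `x` in this interval,
`M(x) ≤ √(k(λ1+λ2)/(λ1λ2(1+2λ1λ2))) + 2√(kλ1λ2(λ1+λ2)/(1+2λ1λ2))`, with
equality at `x = ±√(2kλ2)·√(1−2λ1²)/√(−λ1² + λ1λ2 − 2λ1³λ2 + 2λ1²λ2²)`.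
-/

noncomputable def Mfun (k l1 l2 x : ℝ) : ℝ :=
  Real.sqrt ((2 * k + (l2 - l1) * x ^ 2) / (2 * l2)) +
    Real.sqrt (2 * k * l2 - l1 * (l2 - l1) * x ^ 2)

/-- The claimed maximal value of `M`. -/
noncomputable def Mmax (k l1 l2 : ℝ) : ℝ :=
  Real.sqrt (k * (l1 + l2) / (l1 * l2 * (1 + 2 * l1 * l2))) +
    2 * Real.sqrt (k * l1 * l2 * (l1 + l2) / (1 + 2 * l1 * l2))

/-- The claimed maximizer. -/
noncomputable def xcrit (k l1 l2 : ℝ) : ℝ :=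
  Real.sqrt (2 * k * l2) * Real.sqrt (1 - 2 * l1 ^ 2) /
    Real.sqrt (-l1 ^ 2 + l1 * l2 - 2 * l1 ^ 3 * l2 + 2 * l1 ^ 2 * l2 ^ 2)

private lemma key_cauchy (A u v p : ℝ) (hA : 0 < A) (hu : 0 ≤ u) (hv : 0 ≤ v)
    (hp : 0 ≤ p) (h : A * u ^ 2 + v ^ 2 ≤ A * p ^ 2 + (A * p) ^ 2) :
    u + v ≤ p + A * p := by
  have h1 : A * (u + v) ^ 2 ≤ (1 + A) * (A * u ^ 2 + v ^ 2) := by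
    nlinarith [sq_nonneg (A * u - v)]
  have h2 : (1 + A) * (A * u ^ 2 + v ^ 2) ≤ A * (p + A * p) ^ 2 := by nlinarith
  have h3 : (u + v) ^ 2 ≤ (p + A * p) ^ 2 := by nlinarith
  calc u + v = Real.sqrt ((u + v) ^ 2) := (Real.sqrt_sq (by linarith)).symm
    _ ≤ Real.sqrt ((p + A * p) ^ 2) := Real.sqrt_le_sqrt h3
    _ = p + A * p := Real.sqrt_sq (by positivity)

theorem M_max_at_xcrit (k l1 l2 : ℝ) (hk : 0 < k)
    (h0 : 0 < l1) (h1 : l1 < 1 / Real.sqrt 2) (h12 : l1 ≤ l2) (h2 : 1 < l2) :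
    (∀ x ∈ Set.Icc (-Real.sqrt (2 * k / l1)) (Real.sqrt (2 * k / l1)),
        Mfun k l1 l2 x ≤ Mmax k l1 l2) ∧
    Mfun k l1 l2 (xcrit k l1 l2) = Mmax k l1 l2 ∧
    Mfun k l1 l2 (-(xcrit k l1 l2)) = Mmax k l1 l2 := by
  have hs2 : (0:ℝ) < Real.sqrt 2 := Real.sqrt_pos.mpr (by norm_num)
  have hs2sq : Real.sqrt 2 ^ 2 = 2 := Real.sq_sqrt (by norm_num)
  have hl1s : l1 * Real.sqrt 2 < 1 := by
    have := (lt_div_iff₀ hs2).mp h1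
    linarith
  have h2l1 : 2 * l1 ^ 2 < 1 := by nlinarith [mul_pos h0 hs2]
  have hl2 : 0 < l2 := lt_trans one_pos h2
  have hl1lt2 : l1 < l2 := by nlinarith [sq_nonneg (l1 - 1)]
  have hA : (0:ℝ) < 1 + 2 * l1 * l2 := by positivity
  have hl1ne : l1 ≠ 0 := ne_of_gt h0
  have hl2ne : l2 ≠ 0 := ne_of_gt hl2
  have hAne : (1 + 2 * l1 * l2) ≠ 0 := ne_of_gt hA
  set P := k * (l1 + l2) / (l1 * l2 * (1 + 2 * l1 * l2)) with hPdef
  set Q := k * l1 * l2 * (l1 + l2) / (1 + 2 * l1 * l2) with hQdef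
  have hP : 0 < P := by
    rw [hPdef]; apply div_pos (by nlinarith) (by positivity)
  have hQP : Q = (l1 * l2) ^ 2 * P := by
    rw [hPdef, hQdef]; field_simp
  have hsqQ : Real.sqrt Q = l1 * l2 * Real.sqrt P := by
    rw [hQP, Real.sqrt_mul (sq_nonneg _), Real.sqrt_sq (by positivity)]
  have hMmax : Mmax k l1 l2 = Real.sqrt P + 2 * l1 * l2 * Real.sqrt P := by
    unfold Mmax
    rw [← hPdef, ← hQdef, hsqQ]; ring
  -- equality part helper
  have hD : 0 < -l1 ^ 2 + l1 * l2 - 2 * l1 ^ 3 * l2 + 2 * l1 ^ 2 * l2 ^ 2 := by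
    nlinarith [mul_pos (mul_pos h0 (sub_pos.mpr hl1lt2)) hA]
  have hxc2 : (xcrit k l1 l2) ^ 2 =
      2 * k * l2 * (1 - 2 * l1 ^ 2) /
        (-l1 ^ 2 + l1 * l2 - 2 * l1 ^ 3 * l2 + 2 * l1 ^ 2 * l2 ^ 2) := by
    unfold xcrit
    rw [div_pow, mul_pow, Real.sq_sqrt (by positivity), Real.sq_sqrt (by linarith),
      Real.sq_sqrt hD.le]
  have main : ∀ y : ℝ, y ^ 2 = (xcrit k l1 l2) ^ 2 → Mfun k l1 l2 y = Mmax k l1 l2 := by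
    intro y hy
    have hfa : (2 * k + (l2 - l1) * y ^ 2) / (2 * l2) = P := by
      rw [hy, hxc2, hPdef]; have hD2 : 0 < -l1 + l2 - 2 * l2 * l1 ^ 2 + 2 * l2 ^ 2 * l1 := by nlinarith
      field_simp [hD.ne', hD2.ne']
      ring
    have hfb : 2 * k * l2 - l1 * (l2 - l1) * y ^ 2 = 2 ^ 2 * Q := by
      rw [hy, hxc2, hQdef]; have hD2 : 0 < -l1 + l2 - 2 * l2 * l1 ^ 2 + 2 * l2 ^ 2 * l1 := by nlinarith
      field_simp [hD.ne', hD2.ne']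
      ring
    unfold Mfun
    rw [hfa, hfb, Real.sqrt_mul (by norm_num), Real.sqrt_sq (by norm_num), hMmax, hsqQ]
    ring
  refine ⟨?_, main _ rfl, main _ (by rw [neg_pow]; simp)⟩
  intro x hx
  have hxx : x ^ 2 ≤ 2 * k / l1 := by
    have := sq_le_sq' hx.1 hx.2
    rwa [Real.sq_sqrt (by positivity)] at this
  have hxl1 : l1 * x ^ 2 ≤ 2 * k := by
    have := (le_div_iff₀ h0).mp hxx
    nlinarith
  have ha : 0 ≤ (2 * k + (l2 - l1) * x ^ 2) / (2 * l2) := by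
    apply div_nonneg (by nlinarith [sq_nonneg x]) (by positivity)
  have hb : 0 ≤ 2 * k * l2 - l1 * (l2 - l1) * x ^ 2 := by
    nlinarith [mul_le_mul_of_nonneg_left hxl1 (sub_nonneg.mpr hl1lt2.le), sq_nonneg x]
  rw [hMmax]
  unfold Mfun
  have := key_cauchy (2 * l1 * l2) (Real.sqrt ((2 * k + (l2 - l1) * x ^ 2) / (2 * l2)))
    (Real.sqrt (2 * k * l2 - l1 * (l2 - l1) * x ^ 2)) (Real.sqrt P)
    (by positivity) (Real.sqrt_nonneg _) (Real.sqrt_nonneg _) (Real.sqrt_nonneg _) ?_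
  · linarith [this]
  · rw [mul_pow, Real.sq_sqrt ha, Real.sq_sqrt hb, Real.sq_sqrt hP.le]
    apply le_of_eq
    have e1 : 2 * l1 * l2 * ((2 * k + (l2 - l1) * x ^ 2) / (2 * l2)) +
        (2 * k * l2 - l1 * (l2 - l1) * x ^ 2) = 2 * k * (l1 + l2) := by
      field_simp
      ring
    have e2 : 2 * l1 * l2 * P + (2 * l1 * l2) ^ 2 * P = 2 * k * (l1 + l2) := by
      rw [hPdef]
      field_simp
    rw [e1, e2]
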